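/- Let n ≥ 3 and let λ be a partition of n with a_k parts equal to k. The average number of cyclic descents over the conjugacy class C_λ equals n/2 + (a_2 − a_1(a_1−1)/2)/(n−1) + (a_1 − 1)/(n−1). -/

import Mathlib

open Finset Equiv Equiv.Perm
set_option linter.unusedSectionVars false
set_option linter.unusedVariables false
set_option maxHeartbeats 1000000

/-- The conjugacy class of `S_n` consisting of permutations of cycle type `lam`
(Mathlib's `cycleType` omits fixed points, so we compare with the parts of `lam` not equal
to `1`). -/
noncomputable def conjClass (n : ℕ) (lam : n.Partition) : Finset (Equiv.Perm (Fin n)) :=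
  Finset.univ.filter fun ω => ω.cycleType = Multiset.filter (fun i => i ≠ 1) lam.parts


/-- The successor of `i` in `Fin n`, computed modulo `n`.  This implements the cyclic
convention `ω(n+1) := ω(1)` for cyclic descents. -/
def succMod {n : ℕ} (i : Fin n) : Fin n := ⟨((i : ℕ) + 1) % n, Nat.mod_lt _ i.pos⟩

/-- The number of cyclic descents of a permutation: positions `i ∈ {1,…,n}` with
`ω(i) > ω(i+1)`, where `ω(n+1) := ω(1)`. -/
def cdes {n : ℕ} (ω : Equiv.Perm (Fin n)) : ℕ :=
  (Finset.univ.filter fun i : Fin n => ω (succMod i) < ω i).card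

variable {n : ℕ} [NeZero n]

lemma succMod_eq (hn : 2 ≤ n) (i : Fin n) : succMod i = i + 1 := by
  apply Fin.ext
  simp [succMod, Fin.add_def, Fin.val_one', Nat.mod_eq_of_lt hn]

lemma card_lt_val (m : ℕ) (hm : m ≤ n) :
    (Finset.univ.filter fun s : Fin n => (s : ℕ) < m).card = m := by
  have h : ∀ x ∈ Finset.range m, x < n := fun x hx => lt_of_lt_of_le (mem_range.mp hx) hm
  have : (Finset.univ.filter fun s : Fin n => (s : ℕ) < m) = (Finset.range m).attachFin h := by
    ext a; simp [Finset.mem_attachFin]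
  rw [this, Finset.card_attachFin, Finset.card_range]

lemma sub_val_add (x y : Fin n) (hxy : x ≠ y) : (x - y).val + (y - x).val = n := by
  have hx := x.isLt; have hy := y.isLt
  have hne : x.val ≠ y.val := fun h => hxy (Fin.ext h)
  rw [Fin.sub_def, Fin.sub_def]
  simp only
  rcases Nat.lt_or_ge x.val y.val with h | h
  · have e1 : (n - y.val + x.val) % n = n - y.val + x.val := Nat.mod_eq_of_lt (by omega)
    have e2 : (n - x.val + y.val) % n = n - x.val + y.val - n := by
      rw [Nat.mod_eq_sub_mod (by omega), Nat.mod_eq_of_lt (by omega)]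
    omega
  · have h' : y.val < x.val := by omega
    have e2 : (n - x.val + y.val) % n = n - x.val + y.val := Nat.mod_eq_of_lt (by omega)
    have e1 : (n - y.val + x.val) % n = n - y.val + x.val - n := by
      rw [Nat.mod_eq_sub_mod (by omega), Nat.mod_eq_of_lt (by omega)]
    omega

lemma lt_add_iff (s e : Fin n) (he : e ≠ 0) : s < s + e ↔ (s : ℕ) < n - (e : ℕ) := by
  have hs := s.isLt; have hev : 1 ≤ e.val := by
    rcases Nat.eq_zero_or_pos e.val with h | h
    · exact absurd (Fin.ext h) he
    · exact h
  rw [Fin.lt_iff_val_lt_val, Fin.val_add]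
  constructor
  · intro h2
    by_cases hc : s.val + e.val < n
    · omega
    · exfalso
      rw [Nat.mod_eq_sub_mod (by omega), Nat.mod_eq_of_lt (by omega)] at h2
      omega
  · intro h
    rw [Nat.mod_eq_of_lt (by omega)]
    omega

lemma cnt_lemma (hn : 2 ≤ n) (x y : Fin n) (hxy : x ≠ y) :
    (Finset.univ.filter fun i : Fin n => i + y < i + x).card + (x - y).val = n := by
  have he : x - y ≠ 0 := sub_ne_zero.mpr hxy
  have hev : 1 ≤ (x - y).val := by
    rcases Nat.eq_zero_or_pos (x - y).val with h | h
    · exact absurd (Fin.ext h) he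
    · exact h
  have key : (Finset.univ.filter fun i : Fin n => i + y < i + x).card
      = (Finset.univ.filter fun s : Fin n => (s : ℕ) < n - (x - y).val).card := by
    apply Finset.card_nbij (fun i => i + y)
    · intro i hi
      simp only [Finset.mem_coe, mem_filter, mem_univ, true_and] at hi ⊢
      have h1 : (i + y) + (x - y) = i + x := by abel
      have h2 : (i + y : Fin n) < (i + y) + (x - y) := h1 ▸ hi
      exact (lt_add_iff _ _ he).mp h2
    · intro i hi j hj hij
      exact add_right_cancel hij
    · intro s hs
      simp only [Finset.coe_filter, Set.mem_setOf_eq, mem_univ, true_and] at hs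
      refine ⟨s - y, ?_, by abel⟩
      simp only [Finset.coe_filter, Set.mem_setOf_eq, mem_univ, true_and]
      have h1 : (s - y) + y = s := by abel
      have h2 : (s - y) + x = s + (x - y) := by abel
      rw [h1, h2]
      exact (lt_add_iff _ _ he).mpr hs
  rw [key, card_lt_val _ (by omega)]
  omega

variable {n : ℕ}

lemma mem_conjClass {lam : n.Partition} {ω : Perm (Fin n)} :
    ω ∈ conjClass n lam ↔ ω.cycleType = Multiset.filter (fun i => i ≠ 1) lam.parts := by
  simp [conjClass]

lemma conj_mem {lam : n.Partition} (σ : Perm (Fin n)) {ω : Perm (Fin n)}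
    (h : ω ∈ conjClass n lam) : σ * ω * σ⁻¹ ∈ conjClass n lam := by
  rw [mem_conjClass] at h ⊢
  rw [cycleType_conj, h]

lemma sum_conj {M : Type*} [AddCommMonoid M] (lam : n.Partition) (σ : Perm (Fin n))
    (f : Perm (Fin n) → M) :
    ∑ ω ∈ conjClass n lam, f ω = ∑ ω ∈ conjClass n lam, f (σ * ω * σ⁻¹) := by
  apply Finset.sum_nbij' (i := fun ω => σ⁻¹ * ω * σ) (j := fun ω => σ * ω * σ⁻¹)
  · intro ω hω
    simpa using conj_mem σ⁻¹ hω
  · intro ω hω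
    exact conj_mem σ hω
  · intro ω _; group
  · intro ω _; group
  · intro ω _
    congr 1
    group

lemma card_conj₂ (lam : n.Partition) (σ : Perm (Fin n)) (a b u v : Fin n) :
    ((conjClass n lam).filter fun ω => ω a = u ∧ ω b = v).card
      = ((conjClass n lam).filter fun ω => ω (σ a) = σ u ∧ ω (σ b) = σ v).card := by
  apply Finset.card_nbij (fun ω => σ * ω * σ⁻¹)
  · intro ω hω
    simp only [Finset.mem_coe, mem_filter] at hω ⊢
    refine ⟨conj_mem σ hω.1, ?_, ?_⟩ <;>
      simp [Perm.mul_apply, hω.2.1, hω.2.2]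
  · intro ω _ τ _ h
    simpa using mul_left_cancel (mul_right_cancel h)
  · intro τ hτ
    simp only [coe_filter, Set.mem_setOf_eq, mem_filter] at hτ ⊢
    refine ⟨σ⁻¹ * τ * σ, ⟨?_, ?_, ?_⟩, by group⟩
    · simpa using conj_mem σ⁻¹ hτ.1
    · simp [Perm.mul_apply, hτ.2.1]
    · simp [Perm.mul_apply, hτ.2.2]

lemma card_conj₁ (lam : n.Partition) (σ : Perm (Fin n)) (a u : Fin n) :
    ((conjClass n lam).filter fun ω => ω a = u).card
      = ((conjClass n lam).filter fun ω => ω (σ a) = σ u).card := by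
  apply Finset.card_nbij (fun ω => σ * ω * σ⁻¹)
  · intro ω hω
    simp only [Finset.mem_coe, mem_filter] at hω ⊢
    exact ⟨conj_mem σ hω.1, by simp [Perm.mul_apply, hω.2]⟩
  · intro ω _ τ _ h
    simpa using mul_left_cancel (mul_right_cancel h)
  · intro τ hτ
    simp only [coe_filter, Set.mem_setOf_eq, mem_filter] at hτ ⊢
    exact ⟨σ⁻¹ * τ * σ, ⟨by simpa using conj_mem σ⁻¹ hτ.1, by simp [Perm.mul_apply, hτ.2]⟩, by group⟩

lemma count_comm {ι : Type*} (s : Finset ι) (C : Finset (Perm (Fin n)))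
    (P : ι → Perm (Fin n) → Prop) [∀ i ω, Decidable (P i ω)] :
    ∑ i ∈ s, (C.filter (P i)).card = ∑ ω ∈ C, (s.filter fun i => P i ω).card := by
  simp only [Finset.card_filter]
  exact Finset.sum_comm

lemma count_one_filter (lam : n.Partition) :
    Multiset.count 1 lam.parts + (Multiset.filter (fun i => i ≠ 1) lam.parts).sum = n := by
  have h := Multiset.filter_add_not (fun i => i ≠ 1) lam.parts
  have h2 : lam.parts.filter (fun i => ¬ i ≠ 1) = lam.parts.filter (fun i => i = 1) := by
    apply Multiset.filter_congr
    intro i _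
    tauto
  have h3 : lam.parts.filter (fun i => i = 1) = Multiset.replicate (lam.parts.count 1) 1 := by
    rw [← Multiset.filter_eq']
  have h4 := congrArg Multiset.sum h
  rw [Multiset.sum_add, h2, h3, Multiset.sum_replicate, smul_eq_mul, mul_one, lam.parts_sum] at h4
  omega

lemma fix_card {lam : n.Partition} {ω : Perm (Fin n)} (hω : ω ∈ conjClass n lam) :
    (Finset.univ.filter fun a => ω a = a).card = Multiset.count 1 lam.parts := by
  have hct := mem_conjClass.mp hω
  have hsup : ω.support.card = (Multiset.filter (fun i => i ≠ 1) lam.parts).sum := by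
    rw [← sum_cycleType, hct]
  have hsupp_eq : ω.support = Finset.univ.filter fun a => ¬ ω a = a := by
    ext a; simp [Equiv.Perm.mem_support]
  have h5 := Finset.card_filter_add_card_filter_not
    (s := (Finset.univ : Finset (Fin n))) (p := fun a => ω a = a)
  rw [← hsupp_eq] at h5
  have h6 := count_one_filter lam
  simp only [Finset.card_univ, Fintype.card_fin] at h5
  omega

lemma nonfix_card {lam : n.Partition} {ω : Perm (Fin n)} (hω : ω ∈ conjClass n lam) :
    (Finset.univ.filter fun a => ¬ ω a = a).card + Multiset.count 1 lam.parts = n := by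
  have h5 := Finset.card_filter_add_card_filter_not
    (s := (Finset.univ : Finset (Fin n))) (p := fun a => ω a = a)
  rw [fix_card hω] at h5
  simp only [Finset.card_univ, Fintype.card_fin] at h5
  omega

lemma conjClass_nonempty (lam : n.Partition) : (conjClass n lam).Nonempty := by
  have h : ∃ g : Perm (Fin n), g.cycleType = Multiset.filter (fun i => i ≠ 1) lam.parts := by
    rw [Equiv.Perm.exists_with_cycleType_iff]
    constructor
    · rw [Fintype.card_fin]
      have := count_one_filter lam
      omega
    · intro a ha
      rw [Multiset.mem_filter] at ha
      have := lam.parts_pos ha.1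
      omega
  obtain ⟨g, hg⟩ := h
  exact ⟨g, mem_conjClass.mpr hg⟩

lemma count_two_eq_filter_card (ω : Perm (Fin n)) :
    Multiset.count 2 ω.cycleType
      = (ω.cycleFactorsFinset.filter fun c => c.support.card = 2).card := by
  rw [cycleType_def, Multiset.count_map]
  rw [Finset.card, Finset.filter_val]
  congr 1
  apply Multiset.filter_congr
  intro c _
  simp [eq_comm, Function.comp]

lemma support_cycleOf_of_two {ω : Perm (Fin n)} {a : Fin n} (h1 : ω a ≠ a)
    (h2 : ω (ω a) = a) : (ω.cycleOf a).support = {a, ω a} := by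
  ext b
  rw [mem_support_cycleOf_iff' h1]
  constructor
  · intro hb
    obtain ⟨i, _, rfl⟩ := hb.exists_pow_eq'
    have key : ∀ k : ℕ, (ω ^ k) a = a ∨ (ω ^ k) a = ω a := by
      intro k
      induction k with
      | zero => simp
      | succ m ih =>
        rw [pow_succ']
        rcases ih with h | h
        · right; rw [Perm.mul_apply, h]
        · left; rw [Perm.mul_apply, h, h2]
    rcases key i with h | h <;> simp [h]
  · intro hb
    simp only [Finset.mem_insert, Finset.mem_singleton] at hb
    rcases hb with rfl | rfl
    · exact Equiv.Perm.SameCycle.refl _ _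
    · exact ⟨1, by simp⟩

lemma two_cycle_card {lam : n.Partition} {ω : Perm (Fin n)} (hω : ω ∈ conjClass n lam) :
    (Finset.univ.filter fun a => ω a ≠ a ∧ ω (ω a) = a).card
      = 2 * Multiset.count 2 lam.parts := by
  have hct := mem_conjClass.mp hω
  have hcount : Multiset.count 2 lam.parts = Multiset.count 2 ω.cycleType := by
    rw [hct, Multiset.count_filter]
    simp
  rw [hcount, count_two_eq_filter_card]
  have hset : (Finset.univ.filter fun a => ω a ≠ a ∧ ω (ω a) = a)
      = (ω.cycleFactorsFinset.filter fun c => c.support.card = 2).biUnion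
          Equiv.Perm.support := by
    ext a
    simp only [mem_filter, mem_univ, true_and, Finset.mem_biUnion]
    constructor
    · rintro ⟨h1, h2⟩
      refine ⟨ω.cycleOf a, ?_, ?_⟩
      · refine ⟨cycleOf_mem_cycleFactorsFinset_iff.mpr (mem_support.mpr h1), ?_⟩
        rw [support_cycleOf_of_two h1 h2]
        rw [Finset.card_insert_of_notMem (by simp [Ne.symm h1]), Finset.card_singleton]
      · rw [support_cycleOf_of_two h1 h2]
        simp
    · rintro ⟨c, hc, ha⟩
      obtain ⟨hcf, hc2⟩ := hc
      have happly : ∀ b ∈ c.support, c b = ω b :=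
        (mem_cycleFactorsFinset_iff.mp hcf).2
      obtain ⟨x, y, hxy, rfl⟩ := card_support_eq_two.mp hc2
      have hmem := ha
      have h1 : ω a = Equiv.swap x y a := (happly a ha).symm
      have ha2 : Equiv.swap x y a ∈ (Equiv.swap x y).support :=
        apply_mem_support.mpr ha
      have h2 : ω (Equiv.swap x y a) = Equiv.swap x y (Equiv.swap x y a) :=
        (happly _ ha2).symm
      rw [support_swap hxy] at ha
      simp only [Finset.mem_insert, Finset.mem_singleton] at ha
      constructor
      · rw [h1]
        rcases ha with rfl | rfl <;>
          simp [Equiv.swap_apply_left, Equiv.swap_apply_right, hxy, hxy.symm]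
      · rw [h1, h2, Equiv.swap_apply_self]
  rw [hset, Finset.card_biUnion]
  · rw [Finset.sum_congr rfl (fun c hc => (mem_filter.mp hc).2)]
    rw [Finset.sum_const, smul_eq_mul, mul_comm]
  · intro c1 h1 c2 h2 hne
    have d := cycleFactorsFinset_pairwise_disjoint ω (mem_filter.mp h1).1
      (mem_filter.mp h2).1 hne
    exact d.disjoint_support

section Main

variable [NeZero n]

lemma fzero_ne_one (hn : 2 ≤ n) : (0 : Fin n) ≠ 1 := by
  intro h
  have := congrArg Fin.val h
  rw [Fin.val_zero, Fin.val_one', Nat.mod_eq_of_lt (by omega)] at this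
  omega

lemma exists_perm_pair {a b : Fin n} (hn : 2 ≤ n) (hab : a ≠ b) :
    ∃ σ : Perm (Fin n), σ a = 0 ∧ σ b = 1 := by
  classical
  set b' := Equiv.swap a 0 b with hb'
  have hb0 : b' ≠ 0 := by
    simp only [hb']
    intro h
    exact hab (by simpa using ((Equiv.swap a 0).injective (h.trans (Equiv.swap_apply_left a 0).symm)).symm)
  refine ⟨Equiv.swap b' 1 * Equiv.swap a 0, ?_, ?_⟩
  · simp only [Perm.mul_apply, Equiv.swap_apply_left]
    exact Equiv.swap_apply_of_ne_of_ne (Ne.symm hb0) (fzero_ne_one hn)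
  · simp only [Perm.mul_apply, ← hb', Equiv.swap_apply_left]

/-- the two-point pattern counts -/
noncomputable def Mc (n : ℕ) [NeZero n] (lam : n.Partition) (u v : Fin n) : ℕ :=
  ((conjClass n lam).filter fun ω => ω 0 = u ∧ ω 1 = v).card

lemma Mc_conj (lam : n.Partition) (σ : Perm (Fin n)) (h0 : σ 0 = 0) (h1 : σ 1 = 1)
    (u v : Fin n) : Mc n lam u v = Mc n lam (σ u) (σ v) := by
  unfold Mc
  have := card_conj₂ lam σ 0 1 u v
  rwa [h0, h1] at this

lemma Mc_diag (lam : n.Partition) (hn : 2 ≤ n) (u : Fin n) : Mc n lam u u = 0 := by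
  unfold Mc
  rw [Finset.card_eq_zero, Finset.filter_eq_empty_iff]
  rintro ω - ⟨he0, he1⟩
  exact fzero_ne_one hn (ω.injective (he0.trans he1.symm))

lemma Mc_swap (lam : n.Partition) (hn : 2 ≤ n) {u v : Fin n} (hu0 : u ≠ 0) (hu1 : u ≠ 1)
    (hv0 : v ≠ 0) (hv1 : v ≠ 1) : Mc n lam u v = Mc n lam v u := by
  have h := Mc_conj lam (Equiv.swap u v)
    (Equiv.swap_apply_of_ne_of_ne (Ne.symm hu0) (Ne.symm hv0))
    (Equiv.swap_apply_of_ne_of_ne (Ne.symm hu1) (Ne.symm hv1)) u v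
  rwa [Equiv.swap_apply_left, Equiv.swap_apply_right] at h

lemma Mc_right_indep (lam : n.Partition) {u v v' : Fin n} (hu0 : u = 0 ∨ u = 1)
    (hv0 : v ≠ 0) (hv1 : v ≠ 1) (hv0' : v' ≠ 0) (hv1' : v' ≠ 1) :
    Mc n lam u v = Mc n lam u v' := by
  have h := Mc_conj lam (Equiv.swap v v')
    (Equiv.swap_apply_of_ne_of_ne (Ne.symm hv0) (Ne.symm hv0'))
    (Equiv.swap_apply_of_ne_of_ne (Ne.symm hv1) (Ne.symm hv1')) u v
  rw [Equiv.swap_apply_left] at h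
  have hu : Equiv.swap v v' u = u := by
    rcases hu0 with rfl | rfl
    · exact Equiv.swap_apply_of_ne_of_ne (Ne.symm hv0) (Ne.symm hv0')
    · exact Equiv.swap_apply_of_ne_of_ne (Ne.symm hv1) (Ne.symm hv1')
  rwa [hu] at h

lemma Mc_left_indep (lam : n.Partition) {u u' v : Fin n} (hv0 : v = 0 ∨ v = 1)
    (hu0 : u ≠ 0) (hu1 : u ≠ 1) (hu0' : u' ≠ 0) (hu1' : u' ≠ 1) :
    Mc n lam u v = Mc n lam u' v := by
  have h := Mc_conj lam (Equiv.swap u u')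
    (Equiv.swap_apply_of_ne_of_ne (Ne.symm hu0) (Ne.symm hu0'))
    (Equiv.swap_apply_of_ne_of_ne (Ne.symm hu1) (Ne.symm hu1')) u v
  rw [Equiv.swap_apply_left] at h
  have hv : Equiv.swap u u' v = v := by
    rcases hv0 with rfl | rfl
    · exact Equiv.swap_apply_of_ne_of_ne (Ne.symm hu0) (Ne.symm hu0')
    · exact Equiv.swap_apply_of_ne_of_ne (Ne.symm hu1) (Ne.symm hu1')
  rwa [hv] at h

end Main

section Main2

variable [NeZero n]

lemma sum_fiber (lam : n.Partition) (g : Fin n → Fin n → ℕ) :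
    ∑ ω ∈ conjClass n lam, g (ω 0) (ω 1)
      = ∑ p : Fin n × Fin n, Mc n lam p.1 p.2 * g p.1 p.2 := by
  rw [← Finset.sum_fiberwise (conjClass n lam) (fun ω => (ω 0, ω 1))
    (fun ω => g (ω 0) (ω 1))]
  apply Finset.sum_congr rfl
  intro p _
  have hfe : (conjClass n lam).filter (fun ω => (ω 0, ω 1) = p)
      = (conjClass n lam).filter fun ω => ω 0 = p.1 ∧ ω 1 = p.2 := by
    apply Finset.filter_congr
    intro ω _
    rw [Prod.ext_iff]
  rw [hfe]
  have : ∀ ω ∈ (conjClass n lam).filter fun ω => ω 0 = p.1 ∧ ω 1 = p.2,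
      g (ω 0) (ω 1) = g p.1 p.2 := by
    intro ω hω
    obtain ⟨-, h1, h2⟩ := Finset.mem_filter.mp hω
    rw [h1, h2]
  rw [Finset.sum_congr rfl this, Finset.sum_const, smul_eq_mul]
  rfl

lemma K_eq (lam : n.Partition) :
    (conjClass n lam).card = ∑ p : Fin n × Fin n, Mc n lam p.1 p.2 := by
  have h := sum_fiber lam (fun _ _ => 1)
  simpa using h

lemma D_eq (lam : n.Partition) :
    (∑ ω ∈ conjClass n lam, (ω 0 - ω 1 : Fin n).val)
      = ∑ p : Fin n × Fin n, Mc n lam p.1 p.2 * (p.1 - p.2 : Fin n).val :=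
  sum_fiber lam (fun u v => (u - v : Fin n).val)

lemma F_eq (lam : n.Partition) :
    ((conjClass n lam).filter fun ω => ω 0 = 0).card = ∑ v : Fin n, Mc n lam 0 v := by
  rw [Finset.card_eq_sum_card_fiberwise
    (f := fun ω => ω 1) (t := Finset.univ) (fun ω _ => Finset.mem_univ _)]
  apply Finset.sum_congr rfl
  intro v _
  rw [Finset.filter_filter]
  rfl

lemma Fb_eq (lam : n.Partition) :
    ((conjClass n lam).filter fun ω => ω 1 = 1).card = ∑ u : Fin n, Mc n lam u 1 := by
  rw [Finset.card_eq_sum_card_fiberwise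
    (f := fun ω => ω 0) (t := Finset.univ) (fun ω _ => Finset.mem_univ _)]
  apply Finset.sum_congr rfl
  intro u _
  rw [Finset.filter_filter]
  unfold Mc
  congr 1
  apply Finset.filter_congr
  intro ω _
  tauto

lemma moff_eq (lam : n.Partition) :
    ((conjClass n lam).filter fun ω => ω 0 = 1).card = ∑ v : Fin n, Mc n lam 1 v := by
  rw [Finset.card_eq_sum_card_fiberwise
    (f := fun ω => ω 1) (t := Finset.univ) (fun ω _ => Finset.mem_univ _)]
  apply Finset.sum_congr rfl
  intro v _
  rw [Finset.filter_filter]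
  rfl

lemma moffb_eq (lam : n.Partition) :
    ((conjClass n lam).filter fun ω => ω 1 = 0).card = ∑ u : Fin n, Mc n lam u 0 := by
  rw [Finset.card_eq_sum_card_fiberwise
    (f := fun ω => ω 0) (t := Finset.univ) (fun ω _ => Finset.mem_univ _)]
  apply Finset.sum_congr rfl
  intro u _
  rw [Finset.filter_filter]
  unfold Mc
  congr 1
  apply Finset.filter_congr
  intro ω _
  tauto

lemma sum_split {M : Type*} [AddCommMonoid M] (hn : 2 ≤ n) (g : Fin n → M) :
    ∑ x : Fin n, g x
      = g 0 + g 1 + ∑ x ∈ Finset.univ.filter (fun x : Fin n => x ≠ 0 ∧ x ≠ 1), g x := by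
  have h := Finset.sum_filter_add_sum_filter_not Finset.univ (fun x : Fin n => x = 0 ∨ x = 1) g
  have h1 : Finset.univ.filter (fun x : Fin n => x = 0 ∨ x = 1) = ({0, 1} : Finset (Fin n)) := by
    ext x; simp
  have h2 : Finset.univ.filter (fun x : Fin n => ¬(x = 0 ∨ x = 1))
      = Finset.univ.filter (fun x : Fin n => x ≠ 0 ∧ x ≠ 1) := by
    apply Finset.filter_congr
    intro x _
    simp only [not_or]
  rw [h1, h2, Finset.sum_pair (fzero_ne_one hn)] at h
  exact h.symm

lemma card_S (hn : 2 ≤ n) :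
    (Finset.univ.filter (fun x : Fin n => x ≠ 0 ∧ x ≠ 1)).card = n - 2 := by
  have h := sum_split hn (fun _ : Fin n => (1 : ℕ))
  simp only [Finset.sum_const, smul_eq_mul, mul_one, Finset.card_univ, Fintype.card_fin] at h
  omega

lemma gauss : 2 * (∑ x : Fin n, (x : ℕ)) = n * (n - 1) := by
  rw [Fin.sum_univ_eq_sum_range (fun i => i), mul_comm]
  exact Finset.sum_range_id_mul_two n

lemma sval (x y : Fin n) : (x - y).val = (n - y.val + x.val) % n := by rw [Fin.sub_def]

lemma val_one' (hn : 2 ≤ n) : ((1 : Fin n) : ℕ) = 1 := by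
  rw [Fin.val_one']
  exact Nat.mod_eq_of_lt (by omega)

lemma d01 (hn : 2 ≤ n) : ((0 : Fin n) - 1).val = n - 1 := by
  rw [sval, val_one' hn, Fin.val_zero, Nat.add_zero, Nat.mod_eq_of_lt (by omega)]

lemma d10 (hn : 2 ≤ n) : ((1 : Fin n) - 0).val = 1 := by
  rw [sval, val_one' hn, Fin.val_zero, Nat.sub_zero, Nat.mod_eq_sub_mod (by omega),
    Nat.add_sub_cancel_left, Nat.mod_eq_of_lt (by omega)]

lemma d0v {v : Fin n} (h : 1 ≤ v.val) : ((0 : Fin n) - v).val = n - v.val := by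
  have := v.isLt
  rw [sval, Fin.val_zero, Nat.add_zero, Nat.mod_eq_of_lt (by omega)]

lemma dv0 (v : Fin n) : (v - 0).val = v.val := by
  have := v.isLt
  rw [sval, Fin.val_zero, Nat.sub_zero, Nat.add_comm, Nat.add_mod_right,
    Nat.mod_eq_of_lt (by omega)]

lemma dv1 (hn : 2 ≤ n) {v : Fin n} (h : 2 ≤ v.val) : (v - 1).val = v.val - 1 := by
  have := v.isLt
  rw [sval, val_one' hn, Nat.mod_eq_sub_mod (by omega), Nat.mod_eq_of_lt (by omega)]
  omega

lemma d1v (hn : 2 ≤ n) {v : Fin n} (h : 2 ≤ v.val) : ((1 : Fin n) - v).val = n + 1 - v.val := by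
  have := v.isLt
  rw [sval, val_one' hn, Nat.mod_eq_of_lt (by omega)]
  omega

lemma val_ne_zero {v : Fin n} (h : v ≠ 0) : v.val ≠ 0 := by
  intro he
  exact h (Fin.ext (by simp [he]))

lemma val_ne_one (hn : 2 ≤ n) {v : Fin n} (h : v ≠ 1) : v.val ≠ 1 := by
  intro he
  exact h (Fin.ext (by rw [he, val_one' hn]))

end Main2

section StepA

variable [NeZero n]

lemma conj_addLeft_lt (i : Fin n) (τ : Perm (Fin n)) :
    (((Equiv.addLeft i : Perm (Fin n)) * τ * (Equiv.addLeft i : Perm (Fin n))⁻¹) (i + 1)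
        < ((Equiv.addLeft i : Perm (Fin n)) * τ * (Equiv.addLeft i : Perm (Fin n))⁻¹) i)
      ↔ ((i + τ 1 : Fin n) < i + τ 0) := by
  have e1 : ((Equiv.addLeft i : Perm (Fin n))⁻¹) (i + 1) = 1 := by
    simp [Equiv.Perm.inv_def]
  have e0 : ((Equiv.addLeft i : Perm (Fin n))⁻¹) i = 0 := by
    simp [Equiv.Perm.inv_def]
  rw [Perm.mul_apply, Perm.mul_apply, Perm.mul_apply, Perm.mul_apply, e1, e0]
  rfl

lemma stepA (hn : 3 ≤ n) (lam : n.Partition) :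
    (∑ ω ∈ conjClass n lam, cdes ω) + (∑ ω ∈ conjClass n lam, ((ω 0 - ω 1 : Fin n)).val)
      = (conjClass n lam).card * n := by
  have h2 : 2 ≤ n := by omega
  have hS : (∑ ω ∈ conjClass n lam, cdes ω)
      = ∑ ω ∈ conjClass n lam, ∑ i : Fin n, if ω (i + 1) < ω i then 1 else 0 := by
    apply Finset.sum_congr rfl
    intro ω _
    rw [cdes, Finset.card_filter]
    apply Finset.sum_congr rfl
    intro i _
    rw [succMod_eq h2]
  have key : ∀ i : Fin n, (∑ ω ∈ conjClass n lam, if ω (i + 1) < ω i then (1:ℕ) else 0)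
      = ∑ ω ∈ conjClass n lam, if (i + ω 1 : Fin n) < i + ω 0 then 1 else 0 := by
    intro i
    rw [sum_conj lam (Equiv.addLeft i : Perm (Fin n))
      (fun ω => if ω (i + 1) < ω i then (1:ℕ) else 0)]
    apply Finset.sum_congr rfl
    intro τ _
    simp only [conj_addLeft_lt]
  rw [hS, Finset.sum_comm, Finset.sum_congr rfl (fun i (_ : i ∈ Finset.univ) => key i),
    Finset.sum_comm, ← Finset.sum_add_distrib]
  rw [Finset.sum_congr rfl (fun ω (hω : ω ∈ conjClass n lam) => ?_), Finset.sum_const,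
    smul_eq_mul]
  have hne : ω 0 ≠ ω 1 := fun h => fzero_ne_one h2 (ω.injective h)
  rw [← Finset.card_filter]
  exact cnt_lemma h2 (ω 0) (ω 1) hne

section StepB

variable [NeZero n]

lemma le_sq (m : ℕ) : m ≤ m * m := by
  rcases Nat.eq_zero_or_pos m with h | h
  · simp [h]
  · exact Nat.le_mul_of_pos_left m h

lemma offDiag_univ_card : ((Finset.univ : Finset (Fin n)).offDiag).card = n * n - n := by
  rw [Finset.offDiag_card, Finset.card_univ, Fintype.card_fin]

lemma R2 (hn : 3 ≤ n) (lam : n.Partition) :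
    n * ((conjClass n lam).filter fun ω => ω 0 = 0).card
      = (Multiset.count 1 lam.parts) * (conjClass n lam).card := by
  have h2 : 2 ≤ n := by omega
  have hterm : ∀ a : Fin n, ((conjClass n lam).filter fun ω => ω a = a).card
      = ((conjClass n lam).filter fun ω => ω 0 = 0).card := by
    intro a
    have h := card_conj₁ lam (Equiv.swap 0 a) 0 0
    rw [Equiv.swap_apply_left] at h
    exact h.symm
  have h1 : ∑ a : Fin n, ((conjClass n lam).filter fun ω => ω a = a).card
      = n * ((conjClass n lam).filter fun ω => ω 0 = 0).card := by
    rw [Finset.sum_congr rfl (fun a _ => hterm a), Finset.sum_const, Finset.card_univ,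
      Fintype.card_fin, smul_eq_mul]
  have h3 := count_comm (Finset.univ : Finset (Fin n)) (conjClass n lam) (fun a ω => ω a = a)
  have h4 : ∑ ω ∈ conjClass n lam, (Finset.univ.filter fun a : Fin n => ω a = a).card
      = (Multiset.count 1 lam.parts) * (conjClass n lam).card := by
    rw [Finset.sum_congr rfl (fun ω hω => fix_card hω), Finset.sum_const, smul_eq_mul, mul_comm]
  rw [← h1, h3, h4]

lemma R3 (hn : 3 ≤ n) (lam : n.Partition) :
    (n * n - n) * Mc n lam 0 1 + (Multiset.count 1 lam.parts) * (conjClass n lam).card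
      = (Multiset.count 1 lam.parts) * (Multiset.count 1 lam.parts) * (conjClass n lam).card := by
  have h2 : 2 ≤ n := by omega
  have hterm : ∀ p ∈ (Finset.univ : Finset (Fin n)).offDiag,
      ((conjClass n lam).filter fun ω => ω p.1 = p.1 ∧ ω p.2 = p.2).card = Mc n lam 0 1 := by
    intro p hp
    obtain ⟨-, -, hne⟩ := Finset.mem_offDiag.mp hp
    obtain ⟨σ, hσ1, hσ2⟩ := exists_perm_pair h2 hne
    have h := card_conj₂ lam σ p.1 p.2 p.1 p.2
    rwa [hσ1, hσ2] at h
  have h1 : ∑ p ∈ (Finset.univ : Finset (Fin n)).offDiag,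
      ((conjClass n lam).filter fun ω => ω p.1 = p.1 ∧ ω p.2 = p.2).card
      = (n * n - n) * Mc n lam 0 1 := by
    rw [Finset.sum_congr rfl hterm, Finset.sum_const, smul_eq_mul, offDiag_univ_card]
  have h3 := count_comm ((Finset.univ : Finset (Fin n)).offDiag) (conjClass n lam)
    (fun p ω => ω p.1 = p.1 ∧ ω p.2 = p.2)
  have hset : ∀ ω : Perm (Fin n),
      ((Finset.univ : Finset (Fin n)).offDiag.filter fun p => ω p.1 = p.1 ∧ ω p.2 = p.2)
        = (Finset.univ.filter fun a => ω a = a).offDiag := by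
    intro ω
    ext ⟨x, y⟩
    simp only [Finset.mem_filter, Finset.mem_offDiag, Finset.mem_univ, true_and]
    tauto
  have h4 : ∀ ω ∈ conjClass n lam,
      ((Finset.univ : Finset (Fin n)).offDiag.filter
          fun p => ω p.1 = p.1 ∧ ω p.2 = p.2).card + Multiset.count 1 lam.parts
        = Multiset.count 1 lam.parts * Multiset.count 1 lam.parts := by
    intro ω hω
    rw [hset ω, Finset.offDiag_card, fix_card hω]
    have := le_sq (Multiset.count 1 lam.parts)
    omega
  have h5 : ∑ ω ∈ conjClass n lam,
      (((Finset.univ : Finset (Fin n)).offDiag.filter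
          fun p => ω p.1 = p.1 ∧ ω p.2 = p.2).card + Multiset.count 1 lam.parts)
      = ∑ ω ∈ conjClass n lam,
        Multiset.count 1 lam.parts * Multiset.count 1 lam.parts :=
    Finset.sum_congr rfl h4
  rw [Finset.sum_add_distrib, Finset.sum_const, Finset.sum_const, smul_eq_mul, smul_eq_mul,
    ← h3, h1] at h5
  linarith [h5]

lemma R4 (hn : 3 ≤ n) (lam : n.Partition) :
    (n * n - n) * Mc n lam 1 0
      = 2 * (Multiset.count 2 lam.parts) * (conjClass n lam).card := by
  have h2 : 2 ≤ n := by omega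
  have hterm : ∀ p ∈ (Finset.univ : Finset (Fin n)).offDiag,
      ((conjClass n lam).filter fun ω => ω p.1 = p.2 ∧ ω p.2 = p.1).card = Mc n lam 1 0 := by
    intro p hp
    obtain ⟨-, -, hne⟩ := Finset.mem_offDiag.mp hp
    obtain ⟨σ, hσ1, hσ2⟩ := exists_perm_pair h2 hne
    have h := card_conj₂ lam σ p.1 p.2 p.2 p.1
    rwa [hσ1, hσ2] at h
  have h1 : ∑ p ∈ (Finset.univ : Finset (Fin n)).offDiag,
      ((conjClass n lam).filter fun ω => ω p.1 = p.2 ∧ ω p.2 = p.1).card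
      = (n * n - n) * Mc n lam 1 0 := by
    rw [Finset.sum_congr rfl hterm, Finset.sum_const, smul_eq_mul, offDiag_univ_card]
  have h3 := count_comm ((Finset.univ : Finset (Fin n)).offDiag) (conjClass n lam)
    (fun p ω => ω p.1 = p.2 ∧ ω p.2 = p.1)
  have h4 : ∀ ω ∈ conjClass n lam,
      ((Finset.univ : Finset (Fin n)).offDiag.filter
          fun p => ω p.1 = p.2 ∧ ω p.2 = p.1).card
        = 2 * Multiset.count 2 lam.parts := by
    intro ω hω
    rw [← two_cycle_card hω]
    apply Finset.card_nbij (fun p => p.1)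
    · rintro ⟨x, y⟩ hp
      simp only [Finset.mem_coe, Finset.mem_filter, Finset.mem_offDiag, Finset.mem_univ, true_and] at hp ⊢
      obtain ⟨hne, h1', h2'⟩ := hp
      refine ⟨?_, ?_⟩
      · rw [h1']; exact fun h => hne h.symm
      · rw [h1', h2']
    · rintro ⟨x, y⟩ hp ⟨x', y'⟩ hp' hxy
      simp only [Finset.mem_coe, Finset.mem_filter, Finset.mem_offDiag, Finset.mem_univ,
        true_and] at hp hp'
      simp only at hxy
      subst hxy
      have hyy : y = y' := hp.2.1.symm.trans hp'.2.1
      simp [hyy]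
    · intro a ha
      simp only [Finset.mem_coe, Finset.mem_filter, Finset.mem_univ, true_and] at ha
      refine ⟨(a, ω a), Finset.mem_coe.mpr (Finset.mem_filter.mpr
        ⟨Finset.mem_offDiag.mpr ⟨Finset.mem_univ _, Finset.mem_univ _, ?_⟩, rfl, ha.2⟩), rfl⟩
      exact fun h => ha.1 h.symm
  have h5 := Finset.sum_congr rfl h4
  rw [← h3, h1, Finset.sum_const, smul_eq_mul] at h5
  linarith [h5]

lemma R5 (hn : 3 ≤ n) (lam : n.Partition) :
    (n * n - n) * ((conjClass n lam).filter fun ω => ω 0 = 1).card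
        + (Multiset.count 1 lam.parts) * (conjClass n lam).card
      = n * (conjClass n lam).card := by
  have h2 : 2 ≤ n := by omega
  have hterm : ∀ p ∈ (Finset.univ : Finset (Fin n)).offDiag,
      ((conjClass n lam).filter fun ω => ω p.1 = p.2).card
        = ((conjClass n lam).filter fun ω => ω 0 = 1).card := by
    intro p hp
    obtain ⟨-, -, hne⟩ := Finset.mem_offDiag.mp hp
    obtain ⟨σ, hσ1, hσ2⟩ := exists_perm_pair h2 hne
    have h := card_conj₁ lam σ p.1 p.2
    rwa [hσ1, hσ2] at h
  have h1 : ∑ p ∈ (Finset.univ : Finset (Fin n)).offDiag,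
      ((conjClass n lam).filter fun ω => ω p.1 = p.2).card
      = (n * n - n) * ((conjClass n lam).filter fun ω => ω 0 = 1).card := by
    rw [Finset.sum_congr rfl hterm, Finset.sum_const, smul_eq_mul, offDiag_univ_card]
  have h3 := count_comm ((Finset.univ : Finset (Fin n)).offDiag) (conjClass n lam)
    (fun p ω => ω p.1 = p.2)
  have h4 : ∀ ω ∈ conjClass n lam,
      ((Finset.univ : Finset (Fin n)).offDiag.filter fun p => ω p.1 = p.2).card
          + Multiset.count 1 lam.parts = n := by
    intro ω hω
    have hbij : ((Finset.univ : Finset (Fin n)).offDiag.filter fun p => ω p.1 = p.2).card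
        = (Finset.univ.filter fun a => ¬ ω a = a).card := by
      apply Finset.card_nbij (fun p => p.1)
      · rintro ⟨x, y⟩ hp
        simp only [Finset.mem_coe, Finset.mem_filter, Finset.mem_offDiag, Finset.mem_univ, true_and] at hp ⊢
        obtain ⟨hne, h1'⟩ := hp
        rw [h1']; exact fun h => hne h.symm
      · rintro ⟨x, y⟩ hp ⟨x', y'⟩ hp' hxy
        simp only [Finset.mem_coe, Finset.mem_filter, Finset.mem_offDiag, Finset.mem_univ,
          true_and] at hp hp'
        simp only at hxy
        subst hxy
        have hyy : y = y' := hp.2.symm.trans hp'.2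
        simp [hyy]
      · intro a ha
        simp only [Finset.mem_coe, Finset.mem_filter, Finset.mem_univ, true_and] at ha
        refine ⟨(a, ω a), Finset.mem_coe.mpr (Finset.mem_filter.mpr
          ⟨Finset.mem_offDiag.mpr ⟨Finset.mem_univ _, Finset.mem_univ _, ?_⟩, rfl⟩), rfl⟩
        exact fun h => ha h.symm
    rw [hbij]
    exact nonfix_card hω
  have h5 := Finset.sum_congr rfl h4
  rw [Finset.sum_add_distrib, Finset.sum_const, Finset.sum_const, smul_eq_mul, smul_eq_mul,
    ← h3, h1] at h5
  linarith [h5]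

end StepB

section StepC

variable [NeZero n]

lemma pairing (hn : 3 ≤ n) (lam : n.Partition) :
    2 * (∑ u ∈ Finset.univ.filter (fun x : Fin n => x ≠ 0 ∧ x ≠ 1),
          ∑ v ∈ Finset.univ.filter (fun x : Fin n => x ≠ 0 ∧ x ≠ 1),
            Mc n lam u v * ((u - v : Fin n)).val)
      = n * (∑ u ∈ Finset.univ.filter (fun x : Fin n => x ≠ 0 ∧ x ≠ 1),
          ∑ v ∈ Finset.univ.filter (fun x : Fin n => x ≠ 0 ∧ x ≠ 1), Mc n lam u v) := by
  have h2 : 2 ≤ n := by omega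
  set Sf := Finset.univ.filter (fun x : Fin n => x ≠ 0 ∧ x ≠ 1) with hSf
  rw [← Finset.sum_product' (f := fun u v => Mc n lam u v * ((u - v : Fin n)).val),
    ← Finset.sum_product' (f := fun u v => Mc n lam u v)]
  have hsw : ∑ p ∈ Sf ×ˢ Sf, Mc n lam p.1 p.2 * ((p.1 - p.2 : Fin n)).val
      = ∑ p ∈ Sf ×ˢ Sf, Mc n lam p.2 p.1 * ((p.2 - p.1 : Fin n)).val := by
    apply Finset.sum_nbij' (i := Prod.swap) (j := Prod.swap)
    · rintro ⟨u, v⟩ hp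
      rw [Finset.mem_product] at hp ⊢
      exact ⟨hp.2, hp.1⟩
    · rintro ⟨u, v⟩ hp
      rw [Finset.mem_product] at hp ⊢
      exact ⟨hp.2, hp.1⟩
    · rintro ⟨u, v⟩ _; rfl
    · rintro ⟨u, v⟩ _; rfl
    · rintro ⟨u, v⟩ _; rfl
  have key : ∀ p ∈ Sf ×ˢ Sf,
      Mc n lam p.1 p.2 * ((p.1 - p.2 : Fin n)).val
          + Mc n lam p.2 p.1 * ((p.2 - p.1 : Fin n)).val
        = n * Mc n lam p.1 p.2 := by
    rintro ⟨u, v⟩ hp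
    rw [Finset.mem_product] at hp
    obtain ⟨hu, hv⟩ := hp
    rw [hSf, Finset.mem_filter] at hu hv
    obtain ⟨-, hu0, hu1⟩ := hu
    obtain ⟨-, hv0, hv1⟩ := hv
    by_cases huv : u = v
    · subst huv
      rw [Mc_diag lam h2]
      simp
    · have hMs : Mc n lam v u = Mc n lam u v := Mc_swap lam h2 hv0 hv1 hu0 hu1
      have hdd := sub_val_add u v huv
      simp only
      rw [hMs, ← Nat.mul_add, hdd, Nat.mul_comm]
  calc 2 * ∑ p ∈ Sf ×ˢ Sf, Mc n lam p.1 p.2 * ((p.1 - p.2 : Fin n)).val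
      = ∑ p ∈ Sf ×ˢ Sf, Mc n lam p.1 p.2 * ((p.1 - p.2 : Fin n)).val
        + ∑ p ∈ Sf ×ˢ Sf, Mc n lam p.2 p.1 * ((p.2 - p.1 : Fin n)).val := by
        rw [← hsw]; ring
    _ = ∑ p ∈ Sf ×ˢ Sf, (Mc n lam p.1 p.2 * ((p.1 - p.2 : Fin n)).val
          + Mc n lam p.2 p.1 * ((p.2 - p.1 : Fin n)).val) := by
        rw [Finset.sum_add_distrib]
    _ = ∑ p ∈ Sf ×ˢ Sf, n * Mc n lam p.1 p.2 := Finset.sum_congr rfl key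
    _ = n * ∑ p ∈ Sf ×ˢ Sf, Mc n lam p.1 p.2 := by rw [Finset.mul_sum]

end StepC

theorem stmt9 (n : ℕ) (hn : 3 ≤ n) (lam : n.Partition) (a1 a2 : ℕ)
    (ha1 : a1 = Multiset.count 1 lam.parts) (ha2 : a2 = Multiset.count 2 lam.parts) :
    (∑ ω ∈ conjClass n lam, (cdes ω : ℝ)) / ((conjClass n lam).card : ℝ)
      = (n : ℝ) / 2 + ((a2 : ℝ) - (a1 : ℝ) * ((a1 : ℝ) - 1) / 2) / ((n : ℝ) - 1)
        + ((a1 : ℝ) - 1) / ((n : ℝ) - 1) := by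
  haveI : NeZero n := ⟨by omega⟩
  have h2 : 2 ≤ n := by omega
  -- the distinguished third point
  set v2 : Fin n := ⟨2, by omega⟩ with hv2def
  have hv20 : v2 ≠ 0 := by
    intro h; have := congrArg Fin.val h; simp [hv2def] at this
  have hv21 : v2 ≠ 1 := by
    intro h; have := congrArg Fin.val h; rw [val_one' h2] at this; simp [hv2def] at this
  set Sf := Finset.univ.filter (fun x : Fin n => x ≠ 0 ∧ x ≠ 1) with hSfdef
  have hSmem : ∀ x ∈ Sf, x ≠ 0 ∧ x ≠ 1 := fun x hx => (Finset.mem_filter.mp hx).2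
  have hSval : ∀ x ∈ Sf, 2 ≤ x.val ∧ x.val < n := by
    intro x hx
    have h0 := val_ne_zero (hSmem x hx).1
    have h1 := val_ne_one h2 (hSmem x hx).2
    exact ⟨by omega, x.isLt⟩
  -- quantities
  set K := (conjClass n lam).card with hKdef
  set Sn := ∑ ω ∈ conjClass n lam, cdes ω with hSndef
  set Dn := ∑ ω ∈ conjClass n lam, ((ω 0 - ω 1 : Fin n)).val with hDndef
  set m1 := Mc n lam 0 1 with hm1
  set m2 := Mc n lam 1 0 with hm2
  set m3 := Mc n lam 0 v2 with hm3
  set m4 := Mc n lam v2 1 with hm4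
  set m5 := Mc n lam 1 v2 with hm5
  set m6 := Mc n lam v2 0 with hm6
  set Fq := ((conjClass n lam).filter fun ω => ω 0 = 0).card with hFq
  set moff := ((conjClass n lam).filter fun ω => ω 0 = 1).card with hmoff
  set WA := ∑ x ∈ Sf, (n - x.val) with hWA
  set WB := ∑ x ∈ Sf, (x.val - 1) with hWB
  set WC := ∑ x ∈ Sf, (n + 1 - x.val) with hWC
  set WD := ∑ x ∈ Sf, x.val with hWD
  set Kg := ∑ u ∈ Sf, ∑ v ∈ Sf, Mc n lam u v with hKg
  set Dg := ∑ u ∈ Sf, ∑ v ∈ Sf, Mc n lam u v * ((u - v : Fin n)).val with hDg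
  have hK0 : 0 < K := Finset.card_pos.mpr (conjClass_nonempty lam)
  -- the ℕ identities
  have e1 : Sn + Dn = K * n := stepA hn lam
  have e2 : n * Fq = a1 * K := by rw [ha1]; exact R2 hn lam
  have e3 : (n * n - n) * m1 + a1 * K = a1 * a1 * K := by rw [ha1]; exact R3 hn lam
  have e4 : (n * n - n) * m2 = 2 * a2 * K := by rw [ha2]; exact R4 hn lam
  have e5 : (n * n - n) * moff + a1 * K = n * K := by rw [ha1]; exact R5 hn lam
  have hrow0K : ∀ u : Fin n, u = 0 ∨ u = 1 → ∀ x ∈ Sf, Mc n lam u x = Mc n lam u v2 := by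
    intro u hu x hx
    exact Mc_right_indep lam hu (hSmem x hx).1 (hSmem x hx).2 hv20 hv21
  have hcolK : ∀ v : Fin n, v = 0 ∨ v = 1 → ∀ x ∈ Sf, Mc n lam x v = Mc n lam v2 v := by
    intro v hv x hx
    exact Mc_left_indep lam hv (hSmem x hx).1 (hSmem x hx).2 hv20 hv21
  have hcardS : Sf.card = n - 2 := card_S h2
  -- e6 : Fq = m1 + (n-2) * m3
  have e6 : Fq = m1 + (n - 2) * m3 := by
    rw [hFq, F_eq lam, sum_split h2, Mc_diag lam h2,
      Finset.sum_congr rfl (hrow0K 0 (Or.inl rfl)), Finset.sum_const, smul_eq_mul, hcardS,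
      ← hm3, ← hm1]
    omega
  -- e6' : Fq = m1 + (n-2) * m4
  have hFb : ((conjClass n lam).filter fun ω => ω 1 = 1).card = Fq := by
    have h := card_conj₁ lam (Equiv.swap 0 1) 0 0
    rw [Equiv.swap_apply_left] at h
    exact h.symm
  have e6' : Fq = m1 + (n - 2) * m4 := by
    rw [← hFb, Fb_eq lam, sum_split h2, Mc_diag lam h2,
      Finset.sum_congr rfl (hcolK 1 (Or.inr rfl)), Finset.sum_const, smul_eq_mul, hcardS,
      ← hm4, ← hm1]
    omega
  -- e7 : moff = m2 + (n-2) * m5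
  have e7 : moff = m2 + (n - 2) * m5 := by
    rw [hmoff, moff_eq lam, sum_split h2, Mc_diag lam h2,
      Finset.sum_congr rfl (hrow0K 1 (Or.inr rfl)), Finset.sum_const, smul_eq_mul, hcardS,
      ← hm5, ← hm2]
    omega
  -- e7' : moff = m2 + (n-2) * m6
  have hmb : ((conjClass n lam).filter fun ω => ω 1 = 0).card = moff := by
    have h := card_conj₁ lam (Equiv.swap 0 1) 0 1
    rw [Equiv.swap_apply_left, Equiv.swap_apply_right] at h
    exact h.symm
  have e7' : moff = m2 + (n - 2) * m6 := by
    rw [← hmb, moffb_eq lam, sum_split h2, Mc_diag lam h2,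
      Finset.sum_congr rfl (hcolK 0 (Or.inl rfl)), Finset.sum_const, smul_eq_mul, hcardS,
      ← hm6, ← hm2]
    omega
  -- e9 : K = Fq + moff + (n-2)*m6 + (n-2)*m4 + Kg
  have e9 : K = Fq + moff + (n - 2) * m6 + (n - 2) * m4 + Kg := by
    rw [hKdef, K_eq lam, Fintype.sum_prod_type, sum_split h2 (fun u => ∑ v, Mc n lam u v),
      ← F_eq lam, ← moff_eq lam]
    have hinner : ∀ u ∈ Sf, (∑ v, Mc n lam u v)
        = Mc n lam u 0 + Mc n lam u 1 + ∑ v ∈ Sf, Mc n lam u v := fun u _ => sum_split h2 _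
    rw [Finset.sum_congr rfl hinner, Finset.sum_add_distrib, Finset.sum_add_distrib,
      Finset.sum_congr rfl (hcolK 0 (Or.inl rfl)), Finset.sum_congr rfl (hcolK 1 (Or.inr rfl)),
      Finset.sum_const, Finset.sum_const, smul_eq_mul, smul_eq_mul, hcardS]
    rw [hFq, hmoff, hm6, hm4, hKg]
    ring
  -- e8 : Dn decomposition
  have e8 : Dn = m1 * (n - 1) + m2 + m3 * WA + m4 * WB + m5 * WC + m6 * WD + Dg := by
    rw [hDndef, D_eq lam, Fintype.sum_prod_type,
      sum_split h2 (fun u => ∑ v, Mc n lam u v * ((u - v : Fin n)).val)]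
    have row0 : (∑ v, Mc n lam 0 v * (((0 : Fin n) - v : Fin n)).val)
        = m1 * (n - 1) + m3 * WA := by
      rw [sum_split h2, Mc_diag lam h2, d01 h2]
      have : ∀ x ∈ Sf, Mc n lam 0 x * (((0 : Fin n) - x : Fin n)).val
          = m3 * (n - x.val) := by
        intro x hx
        rw [hrow0K 0 (Or.inl rfl) x hx, d0v (by have := hSval x hx; omega)]
      rw [Finset.sum_congr rfl this, ← Finset.mul_sum, ← hWA, ← hm1]
      omega
    have row1 : (∑ v, Mc n lam 1 v * (((1 : Fin n) - v : Fin n)).val)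
        = m2 + m5 * WC := by
      rw [sum_split h2, Mc_diag lam h2, d10 h2]
      have : ∀ x ∈ Sf, Mc n lam 1 x * (((1 : Fin n) - x : Fin n)).val
          = m5 * (n + 1 - x.val) := by
        intro x hx
        rw [hrow0K 1 (Or.inr rfl) x hx, d1v h2 (hSval x hx).1]
      rw [Finset.sum_congr rfl this, ← Finset.mul_sum, ← hWC, ← hm2]
      omega
    have rows : (∑ u ∈ Sf, ∑ v, Mc n lam u v * ((u - v : Fin n)).val)
        = m6 * WD + m4 * WB + Dg := by
      have hinner : ∀ u ∈ Sf, (∑ v, Mc n lam u v * ((u - v : Fin n)).val)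
          = Mc n lam v2 0 * u.val + Mc n lam v2 1 * (u.val - 1)
            + ∑ v ∈ Sf, Mc n lam u v * ((u - v : Fin n)).val := by
        intro u hu
        rw [sum_split h2, dv0, dv1 h2 (hSval u hu).1,
          hcolK 0 (Or.inl rfl) u hu, hcolK 1 (Or.inr rfl) u hu]
      rw [Finset.sum_congr rfl hinner, Finset.sum_add_distrib, Finset.sum_add_distrib,
        ← Finset.mul_sum, ← Finset.mul_sum, ← hWD, ← hWB, ← hDg, ← hm6, ← hm4]
    rw [row0, row1, rows]
    ring
  -- e10
  have e10 : 2 * Dg = n * Kg := pairing hn lam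
  -- W identities
  have e11 : WA + WD = (n - 2) * n := by
    rw [hWA, hWD, ← Finset.sum_add_distrib]
    have : ∀ x ∈ Sf, (n - x.val) + x.val = n := by
      intro x hx; have := hSval x hx; omega
    rw [Finset.sum_congr rfl this, Finset.sum_const, smul_eq_mul, hcardS]
  have e12 : WB + (n - 2) = WD := by
    rw [hWB, hWD, ← hcardS, Finset.card_eq_sum_ones, ← Finset.sum_add_distrib]
    apply Finset.sum_congr rfl
    intro x hx
    have := hSval x hx
    omega
  have e13 : WC = WA + (n - 2) := by
    rw [hWC, hWA, ← hcardS, Finset.card_eq_sum_ones, ← Finset.sum_add_distrib]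
    apply Finset.sum_congr rfl
    intro x hx
    have := hSval x hx
    omega
  have e14 : 2 * WD + 2 = n * (n - 1) := by
    have hg := gauss (n := n)
    have hsplit := sum_split h2 (fun x : Fin n => x.val)
    rw [Fin.val_zero, val_one' h2, ← hWD] at hsplit
    rw [hsplit] at hg
    omega
  -- cast everything to ℝ
  have c1n : ((n - 1 : ℕ) : ℝ) = (n : ℝ) - 1 := by
    rw [Nat.cast_sub (by omega : 1 ≤ n)]; norm_num
  have c2n : ((n - 2 : ℕ) : ℝ) = (n : ℝ) - 2 := by
    rw [Nat.cast_sub (by omega : 2 ≤ n)]; norm_num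
  have cnn : ((n * n - n : ℕ) : ℝ) = (n : ℝ) * (n : ℝ) - (n : ℝ) := by
    rw [Nat.cast_sub (le_sq n)]; push_cast; ring
  have r1 : (Sn : ℝ) + (Dn : ℝ) = (K : ℝ) * n := by exact_mod_cast e1
  have r2 : (n : ℝ) * Fq = a1 * K := by exact_mod_cast e2
  have r3 : ((n : ℝ) * n - n) * m1 + a1 * K = a1 * a1 * K := by
    have h : (((n * n - n) * m1 + a1 * K : ℕ) : ℝ) = ((a1 * a1 * K : ℕ) : ℝ) := by
      exact_mod_cast e3
    push_cast [cnn] at h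
    linear_combination h
  have r4 : ((n : ℝ) * n - n) * m2 = 2 * a2 * K := by
    have h : (((n * n - n) * m2 : ℕ) : ℝ) = ((2 * a2 * K : ℕ) : ℝ) := by exact_mod_cast e4
    push_cast [cnn] at h
    linear_combination h
  have r5 : ((n : ℝ) * n - n) * moff + a1 * K = (n : ℝ) * K := by
    have h : (((n * n - n) * moff + a1 * K : ℕ) : ℝ) = ((n * K : ℕ) : ℝ) := by exact_mod_cast e5
    push_cast [cnn] at h
    linear_combination h
  have r6 : (Fq : ℝ) = m1 + ((n : ℝ) - 2) * m3 := by
    have h : ((Fq : ℕ) : ℝ) = ((m1 + (n - 2) * m3 : ℕ) : ℝ) := by exact_mod_cast e6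
    push_cast [c2n] at h
    linear_combination h
  have r6' : (Fq : ℝ) = m1 + ((n : ℝ) - 2) * m4 := by
    have h : ((Fq : ℕ) : ℝ) = ((m1 + (n - 2) * m4 : ℕ) : ℝ) := by exact_mod_cast e6'
    push_cast [c2n] at h
    linear_combination h
  have r7 : (moff : ℝ) = m2 + ((n : ℝ) - 2) * m5 := by
    have h : ((moff : ℕ) : ℝ) = ((m2 + (n - 2) * m5 : ℕ) : ℝ) := by exact_mod_cast e7
    push_cast [c2n] at h
    linear_combination h
  have r7' : (moff : ℝ) = m2 + ((n : ℝ) - 2) * m6 := by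
    have h : ((moff : ℕ) : ℝ) = ((m2 + (n - 2) * m6 : ℕ) : ℝ) := by exact_mod_cast e7'
    push_cast [c2n] at h
    linear_combination h
  have r8 : (Dn : ℝ) = m1 * ((n : ℝ) - 1) + m2 + m3 * WA + m4 * WB + m5 * WC + m6 * WD + Dg := by
    have h : ((Dn : ℕ) : ℝ)
        = ((m1 * (n - 1) + m2 + m3 * WA + m4 * WB + m5 * WC + m6 * WD + Dg : ℕ) : ℝ) := by
      exact_mod_cast e8
    push_cast [c1n] at h
    linear_combination h
  have r9 : (K : ℝ) = Fq + moff + ((n : ℝ) - 2) * m6 + ((n : ℝ) - 2) * m4 + Kg := by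
    have h : ((K : ℕ) : ℝ)
        = ((Fq + moff + (n - 2) * m6 + (n - 2) * m4 + Kg : ℕ) : ℝ) := by exact_mod_cast e9
    push_cast [c2n] at h
    linear_combination h
  have r10 : 2 * (Dg : ℝ) = (n : ℝ) * Kg := by exact_mod_cast e10
  have r11 : (WA : ℝ) + WD = ((n : ℝ) - 2) * n := by
    have h : ((WA + WD : ℕ) : ℝ) = (((n - 2) * n : ℕ) : ℝ) := by exact_mod_cast e11
    push_cast [c2n] at h
    linear_combination h
  have r12 : (WB : ℝ) + ((n : ℝ) - 2) = WD := by
    have h : ((WB + (n - 2) : ℕ) : ℝ) = ((WD : ℕ) : ℝ) := by exact_mod_cast e12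
    push_cast [c2n] at h
    linear_combination h
  have r13 : (WC : ℝ) = WA + ((n : ℝ) - 2) := by
    have h : ((WC : ℕ) : ℝ) = ((WA + (n - 2) : ℕ) : ℝ) := by exact_mod_cast e13
    push_cast [c2n] at h
    linear_combination h
  have r14 : 2 * (WD : ℝ) + 2 = (n : ℝ) * ((n : ℝ) - 1) := by
    have h : ((2 * WD + 2 : ℕ) : ℝ) = ((n * (n - 1) : ℕ) : ℝ) := by exact_mod_cast e14
    push_cast [c1n] at h
    linear_combination h
  -- solve the linear system
  have hN3 : (3 : ℝ) ≤ (n : ℝ) := by exact_mod_cast hn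
  have hne2 : (n : ℝ) - 2 ≠ 0 := by intro h; linarith
  have s1 : ((n : ℝ) - 2) * m3 = Fq - m1 := by linear_combination -r6
  have s2 : ((n : ℝ) - 2) * m4 = Fq - m1 := by linear_combination -r6'
  have s3 : ((n : ℝ) - 2) * m5 = (moff : ℝ) - m2 := by linear_combination -r7
  have s4 : ((n : ℝ) - 2) * m6 = (moff : ℝ) - m2 := by linear_combination -r7'
  have w1 : 2 * (WA : ℝ) = ((n : ℝ) - 2) * ((n : ℝ) - 1) := by
    linear_combination 2 * r11 - r14
  have w2 : 2 * (WB : ℝ) = ((n : ℝ) - 2) * ((n : ℝ) - 1) := by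
    linear_combination 2 * r12 + r14
  have w3 : 2 * (WC : ℝ) = ((n : ℝ) - 2) * ((n : ℝ) + 1) := by
    linear_combination 2 * r13 + w1
  have g1 : 2 * ((n : ℝ) - 2) * Dn
      = 2 * ((n : ℝ) - 2) * (m1 * ((n : ℝ) - 1) + m2 + Dg)
        + 2 * (WA : ℝ) * ((Fq : ℝ) - m1) + 2 * (WB : ℝ) * ((Fq : ℝ) - m1)
        + 2 * (WC : ℝ) * ((moff : ℝ) - m2) + 2 * (WD : ℝ) * ((moff : ℝ) - m2) := by
    linear_combination 2 * ((n : ℝ) - 2) * r8 + 2 * (WA : ℝ) * s1 + 2 * (WB : ℝ) * s2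
      + 2 * (WC : ℝ) * s3 + 2 * (WD : ℝ) * s4
  have g2 : 2 * ((n : ℝ) - 2) * Dn
      = 2 * ((n : ℝ) - 2) * (m1 * ((n : ℝ) - 1) + m2 + Dg)
        + 2 * ((n : ℝ) - 1) * ((n : ℝ) - 2) * ((Fq : ℝ) - m1)
        + 2 * ((n : ℝ) * n - n - 2) * ((moff : ℝ) - m2) := by
    linear_combination g1 + ((Fq : ℝ) - m1) * w1 + ((Fq : ℝ) - m1) * w2
      + ((moff : ℝ) - m2) * w3 + ((moff : ℝ) - m2) * r14
  have g3 : (Kg : ℝ) = K - 2 * Fq - 2 * moff + m1 + m2 := by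
    linear_combination -r9 - s2 - s4
  have g4 : 2 * ((n : ℝ) - 2) * Dg
      = (n : ℝ) * ((n : ℝ) - 2) * ((K : ℝ) - 2 * Fq - 2 * moff + m1 + m2) := by
    linear_combination ((n : ℝ) - 2) * r10 + (n : ℝ) * ((n : ℝ) - 2) * g3
  have g5 : ((n : ℝ) - 2) * (2 * Dn)
      = ((n : ℝ) - 2) * ((n : ℝ) * m1 - (n : ℝ) * m2 - 2 * Fq + 2 * moff + (n : ℝ) * K) := by
    linear_combination g2 + g4
  have g6 : 2 * (Dn : ℝ)
      = (n : ℝ) * m1 - (n : ℝ) * m2 - 2 * Fq + 2 * moff + (n : ℝ) * K :=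
    mul_left_cancel₀ hne2 g5
  have key : 2 * (n : ℝ) * ((n : ℝ) - 1) * Sn
      = K * ((n : ℝ) * n * ((n : ℝ) - 1) + 2 * (n : ℝ) * a2
        - (n : ℝ) * a1 * ((a1 : ℝ) - 1) + 2 * (n : ℝ) * ((a1 : ℝ) - 1)) := by
    linear_combination 2 * (n : ℝ) * ((n : ℝ) - 1) * r1 - (n : ℝ) * ((n : ℝ) - 1) * g6
      - (n : ℝ) * r3 + (n : ℝ) * r4 + 2 * ((n : ℝ) - 1) * r2 - 2 * r5
  -- finish
  have hcast : (∑ ω ∈ conjClass n lam, (cdes ω : ℝ)) = (Sn : ℝ) := by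
    rw [hSndef, Nat.cast_sum]
  have hKne : ((K : ℕ) : ℝ) ≠ 0 := Nat.cast_ne_zero.mpr (by omega)
  have hn1 : (n : ℝ) - 1 ≠ 0 := by intro h; linarith
  have hnne : (n : ℝ) ≠ 0 := by intro h; linarith
  have key2 : 2 * ((n : ℝ) - 1) * Sn
      = K * ((n : ℝ) * ((n : ℝ) - 1) + 2 * a2 - a1 * ((a1 : ℝ) - 1) + 2 * ((a1 : ℝ) - 1)) :=
    mul_left_cancel₀ hnne (by linear_combination key)
  rw [hcast]
  field_simp
  linear_combination key2
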